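/- arXiv:2003.12308 — 2 statements merged into one kernel-verified Lean document; each statement's English description precedes it below -/
import Mathlib

section
/- Let n ≥ 2 be even, m ≥ 1, and let F : 𝔽₂ⁿ → 𝔽₂ᵐ be a bent function. Then C(F) is a [2ⁿ, n+m+1, 2^{n−1} − 2^{n/2−1}] linear code: the map (ε, a, b) ↦ (x ↦ ε ⊕ ⟨a,x⟩ ⊕ ⟨b,F(x)⟩) from 𝔽₂ × 𝔽₂ⁿ × 𝔽₂ᵐ to 𝔽₂^{𝔽₂ⁿ} is injective (so C(F) has 𝔽₂-dimension n+m+1), and the minimum weight of a nonzero codeword of C(F) equals 2^{n−1} − 2^{n/2−1}. -/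
open Finset Function

/-- The vector space `𝔽₂ⁿ`. -/
abbrev BV (n : ℕ) := Fin n → ZMod 2

/-- The standard dot product `⟨u,v⟩ = Σᵢ uᵢ vᵢ` on `𝔽₂ⁿ`. -/
def bdot {n : ℕ} (u v : BV n) : ZMod 2 := ∑ i, u i * v i

/-- The Walsh coefficient `W_F(a,b) = Σ_x (−1)^{⟨b,F(x)⟩ ⊕ ⟨a,x⟩}` of an `(n,m)`-function. -/
def walsh {n m : ℕ} (F : BV n → BV m) (a : BV n) (b : BV m) : ℤ :=
  ∑ x : BV n, (-1 : ℤ) ^ ((bdot b (F x) + bdot a x).val)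

/-- An `(n,m)`-function is bent if all Walsh coefficients `W_F(a,b)`, `b ≠ 0`, equal `±2^{n/2}`. -/
def IsBent {n m : ℕ} (F : BV n → BV m) : Prop :=
  ∀ (a : BV n) (b : BV m), b ≠ 0 →
    walsh F a b = 2 ^ (n / 2) ∨ walsh F a b = -2 ^ (n / 2)

/-- A map `𝔽₂ⁿ → 𝔽₂ᵐ` is affine if it is a linear map followed by a translation. -/
def IsAffineF {n m : ℕ} (A : BV n → BV m) : Prop :=
  ∃ (L : BV n →ₗ[ZMod 2] BV m) (t : BV m), ∀ x, A x = L x + t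

/-- Extended-affine equivalence of `(n,m)`-functions: `F = A₁ ∘ F' ∘ A₂ + A₃` with `A₁`
a linear automorphism of `𝔽₂ᵐ`, `A₂` an affine automorphism of `𝔽₂ⁿ`, `A₃` affine. -/
def EAequiv {n m : ℕ} (F F' : BV n → BV m) : Prop :=
  ∃ (A₁ : BV m →ₗ[ZMod 2] BV m) (A₂ : BV n → BV n) (A₃ : BV n → BV m),
    Bijective A₁ ∧ IsAffineF A₂ ∧ Bijective A₂ ∧ IsAffineF A₃ ∧
    ∀ x, F x = A₁ (F' (A₂ x)) + A₃ x

/-- A codeword of the code `C(F)`: `x ↦ ε ⊕ ⟨a,x⟩ ⊕ ⟨b,F(x)⟩`. -/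
def codeword {n m : ℕ} (F : BV n → BV m) (ε : ZMod 2) (a : BV n) (b : BV m) :
    BV n → ZMod 2 :=
  fun x => ε + bdot a x + bdot b (F x)

/-- The linear code `C(F) = { x ↦ ε ⊕ ⟨a,x⟩ ⊕ ⟨b,F(x)⟩ }` of length `2ⁿ`. -/
def code {n m : ℕ} (F : BV n → BV m) : Set (BV n → ZMod 2) :=
  { c | ∃ (ε : ZMod 2) (a : BV n) (b : BV m), c = codeword F ε a b }

/-- The weight of a codeword: the size of its support. -/
def wtc {n : ℕ} (c : BV n → ZMod 2) : ℕ :=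
  (Finset.univ.filter (fun x => c x = 1)).card

lemma zmod2_cases (u : ZMod 2) : u = 0 ∨ u = 1 := by revert u; decide

lemma neg_one_val_add (u v : ZMod 2) :
    (-1:ℤ)^((u+v).val) = (-1)^u.val * (-1)^v.val := by revert u v; decide

lemma neg_one_val (u : ZMod 2) : (-1:ℤ)^u.val = if u = 1 then -1 else 1 := by revert u; decide

lemma bdot_zero_right {n : ℕ} (a : BV n) : bdot a 0 = 0 := by simp [bdot]

lemma bdot_zero_left {n : ℕ} (a : BV n) : bdot 0 a = 0 := by simp [bdot]

lemma bdot_single {n : ℕ} (a : BV n) (i : Fin n) : bdot a (Pi.single i 1) = a i := by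
  simp [bdot, Pi.single_apply]

lemma bdot_add_right {n : ℕ} (a x y : BV n) : bdot a (x + y) = bdot a x + bdot a y := by
  simp [bdot, mul_add, Finset.sum_add_distrib]

lemma bdot_sub_left {n : ℕ} (a b x : BV n) : bdot (a - b) x = bdot a x - bdot b x := by
  simp [bdot, sub_mul, Finset.sum_sub_distrib]

lemma card_BV (n : ℕ) : Fintype.card (BV n) = 2 ^ n := by
  simp [Fintype.card_fun]

lemma sum_pm {n : ℕ} (c : BV n → ZMod 2) :
    ∑ x : BV n, (-1:ℤ)^((c x).val) = 2^n - 2 * wtc c := by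
  have h1 : ((Finset.univ.filter (fun x => c x = 1)).card : ℤ)
      + (Finset.univ.filter (fun x => ¬ c x = 1)).card = 2^n := by
    rw [← Nat.cast_add, Finset.card_filter_add_card_filter_not, Finset.card_univ, card_BV]
    push_cast; ring
  simp only [neg_one_val]
  rw [Finset.sum_ite, Finset.sum_const, Finset.sum_const]
  unfold wtc
  simp only [smul_eq_mul, nsmul_eq_mul, mul_one, mul_neg_one]
  omega

lemma sum_char {n : ℕ} {a : BV n} (ha : a ≠ 0) :
    ∑ x : BV n, (-1:ℤ)^((bdot a x).val) = 0 := by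
  obtain ⟨i, hi⟩ : ∃ i, a i ≠ 0 := by
    by_contra h; push_neg at h; exact ha (funext fun i => h i)
  have hai : a i = 1 := (zmod2_cases (a i)).resolve_left hi
  have key := Equiv.sum_comp (Equiv.addRight (Pi.single i 1))
    (fun x : BV n => (-1:ℤ)^((bdot a x).val))
  simp only [Equiv.coe_addRight] at key
  have h2 : ∀ x : BV n, (-1:ℤ)^((bdot a (x + Pi.single i 1)).val)
      = -(-1:ℤ)^((bdot a x).val) := by
    intro x
    rw [bdot_add_right, bdot_single, hai, neg_one_val_add]
    simp [neg_one_val]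
  rw [Finset.sum_congr rfl (fun x _ => h2 x), Finset.sum_neg_distrib] at key
  linarith

lemma sum_codeword {n m : ℕ} (F : BV n → BV m) (ε : ZMod 2) (a : BV n) (b : BV m) :
    ∑ x : BV n, (-1:ℤ)^((codeword F ε a b x).val) = (-1)^ε.val * walsh F a b := by
  unfold codeword walsh
  rw [Finset.mul_sum]
  refine Finset.sum_congr rfl fun x _ => ?_
  rw [show ε + bdot a x + bdot b (F x) = ε + (bdot b (F x) + bdot a x) by ring,
    neg_one_val_add]

/-- For an `(n,m)`-bent function `F`, the code `C(F)` is a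
`[2ⁿ, n+m+1, 2^{n−1} − 2^{n/2−1}]` linear code: the parametrization of codewords by
`(ε, a, b)` is injective (so `C(F)` has dimension `n+m+1`), and the minimum weight of a
nonzero codeword equals `2^{n−1} − 2^{n/2−1}`. -/
theorem code_of_bent_is_good
    {n m : ℕ} (hn : 2 ≤ n) (hev : Even n) (hm : 1 ≤ m)
    (F : BV n → BV m) (hF : IsBent F) :
    Function.Injective
        (fun p : ZMod 2 × BV n × BV m => codeword F p.1 p.2.1 p.2.2) ∧
      IsLeast { w : ℕ | ∃ c ∈ code F, c ≠ 0 ∧ wtc c = w }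
        (2 ^ (n - 1) - 2 ^ (n / 2 - 1)) := by
  have hv0 : ((0:ZMod 2)).val = 0 := rfl
  have hv1 : ((1:ZMod 2)).val = 1 := rfl
  have e1 : (2:ℤ)^n = 2 * 2^(n-1) := by rw [← pow_succ']; congr 1; omega
  have e2 : (2:ℤ)^(n/2) = 2 * 2^(n/2-1) := by rw [← pow_succ']; congr 1; omega
  have e3 : (2:ℤ)^(n/2-1) < 2^(n-1) := by
    apply pow_lt_pow_right₀ one_lt_two; omega
  have e4 : (0:ℤ) < 2^(n/2-1) := by positivity
  have htgt : ((2^(n-1) - 2^(n/2-1) : ℕ) : ℤ) = 2^(n-1) - 2^(n/2-1) := by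
    have : (2:ℕ)^(n/2-1) ≤ 2^(n-1) := Nat.pow_le_pow_right (by norm_num) (by omega)
    rw [Nat.cast_sub this, Nat.cast_pow, Nat.cast_pow, Nat.cast_ofNat]
  constructor
  · rintro ⟨ε, a, b⟩ ⟨ε', a', b'⟩ h
    simp only at h
    have heq : ∀ x, ε + bdot a x + bdot b (F x) = ε' + bdot a' x + bdot b' (F x) :=
      fun x => congrFun h x
    have hb : b = b' := by
      by_contra hbb
      have hd : b - b' ≠ 0 := sub_ne_zero.mpr hbb
      have hpt : ∀ x, bdot (b - b') (F x) + bdot (a - a') x = ε' - ε := by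
        intro x; rw [bdot_sub_left, bdot_sub_left]; linear_combination (heq x)
      have hw : walsh F (a-a') (b-b') = (-1:ℤ)^((ε'-ε).val) * 2^n := by
        unfold walsh
        calc ∑ x : BV n, (-1:ℤ)^((bdot (b-b') (F x) + bdot (a-a') x).val)
            = ∑ _x : BV n, (-1:ℤ)^((ε'-ε).val) :=
              Finset.sum_congr rfl (fun x _ => by rw [hpt x])
          _ = _ := by
              rw [Finset.sum_const, Finset.card_univ, card_BV]; push_cast; ring
      have hbent := hF (a-a') (b-b') hd
      have hb2 : (2:ℤ)^(n/2) < 2^n := pow_lt_pow_right₀ one_lt_two (by omega)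
      have hb3 : (0:ℤ) < 2^(n/2) := by positivity
      rcases zmod2_cases (ε' - ε) with h0 | h0 <;>
        rw [h0] at hw <;> simp only [hv0, hv1, pow_zero, pow_one, one_mul, neg_one_mul] at hw <;>
        omega
    subst hb
    have heq2 : ∀ x, ε + bdot a x = ε' + bdot a' x := fun x => add_right_cancel (heq x)
    have hε : ε = ε' := by
      have := heq2 0
      rwa [bdot_zero_right, bdot_zero_right, add_zero, add_zero] at this
    subst hε
    have ha : a = a' := by
      funext i
      have := heq2 (Pi.single i 1)
      rw [bdot_single, bdot_single] at this
      exact add_left_cancel this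
    subst ha; rfl
  · constructor
    · set b0 : BV m := Pi.single ⟨0, hm⟩ 1 with hb0
      have hb0ne : b0 ≠ 0 := by
        intro h
        have := congrFun h ⟨0, hm⟩
        rw [hb0] at this
        simp at this
      have hbent := hF 0 b0 hb0ne
      obtain ⟨ε, hε⟩ : ∃ ε : ZMod 2, (-1:ℤ)^ε.val * walsh F 0 b0 = 2^(n/2) := by
        rcases hbent with h | h
        · exact ⟨0, by rw [hv0, pow_zero, one_mul, h]⟩
        · exact ⟨1, by rw [hv1, pow_one, h]; ring⟩
      refine ⟨codeword F ε 0 b0, ⟨ε, 0, b0, rfl⟩, ?_, ?_⟩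
      all_goals
        have hsum := sum_pm (codeword F ε 0 b0)
        rw [sum_codeword, hε] at hsum
      · intro h0
        have hz : wtc (codeword F ε 0 b0) = 0 := by rw [h0]; simp [wtc]
        have hz' : (wtc (codeword F ε 0 b0) : ℤ) = 0 := by exact_mod_cast hz
        linarith
      · have : (wtc (codeword F ε 0 b0) : ℤ) = ((2^(n-1) - 2^(n/2-1) : ℕ) : ℤ) := by
          rw [htgt]; linarith
        exact_mod_cast this
    · rintro w ⟨c, ⟨ε, a, b, rfl⟩, hc0, rfl⟩
      by_cases hbz : b = 0
      · subst hbz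
        by_cases haz : a = 0
        · subst haz
          have hεe : ε = 1 := by
            rcases zmod2_cases ε with h | h
            · exfalso; apply hc0; funext x
              simp [codeword, h, bdot_zero_left]
            · exact h
          subst hεe
          have hwt : wtc (codeword F 1 0 0) = 2^n := by
            unfold wtc
            rw [Finset.filter_true_of_mem, Finset.card_univ, card_BV]
            intro x _
            simp [codeword, bdot_zero_left]
          rw [hwt]
          have h1 : (2:ℕ)^(n-1) ≤ 2^n := Nat.pow_le_pow_right (by norm_num) (by omega)
          exact le_trans (Nat.sub_le _ _) h1
        · have hs := sum_pm (codeword F ε a 0)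
          rw [sum_codeword] at hs
          have hw0 : walsh F a 0 = 0 := by
            unfold walsh
            rw [← sum_char haz]
            exact Finset.sum_congr rfl fun x _ => by rw [bdot_zero_left, zero_add]
          rw [hw0, mul_zero] at hs
          omega
      · have hbent := hF a b hbz
        have hs := sum_pm (codeword F ε a b)
        rw [sum_codeword] at hs
        have hZ : ((2^(n-1) - 2^(n/2-1) : ℕ) : ℤ) ≤ (wtc (codeword F ε a b) : ℤ) := by
          rw [htgt]
          rcases zmod2_cases ε with h | h <;>
            subst h <;>
            simp only [hv0, hv1, pow_zero, pow_one, one_mul, neg_one_mul] at hs <;>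
            rcases hbent with hb1 | hb1 <;> linarith
        exact_mod_cast hZ
end

section
/- Let n be even, m ≥ 1, let F, F' : 𝔽₂ⁿ → 𝔽₂ᵐ be extended-affine equivalent bent functions, and let G, G' : 𝔽₂ⁿ → 𝔽₂^{m+1} be extended-affine equivalent bent functions such that the first m coordinate functions of G form F and the first m coordinate functions of G' form F'. Then the sets { A : 𝔽₂^{m+1} → 𝔽₂ᵐ | A is a surjective 𝔽₂-linear map and A ∘ G is extended-affine equivalent to F } and { A : 𝔽₂^{m+1} → 𝔽₂ᵐ | A is a surjective 𝔽₂-linear map and A ∘ G' is extended-affine equivalent to F' } have the same cardinality. (This common cardinality equals |GL(m,2)| times the number |𝒮(F,G)| of (n,m)-bent spaces of G that are EA-equivalent to F, so |𝒮(F,G)| = |𝒮(F',G')|.) -/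
open Finset Function

/-- The `(n,m)`-function formed by the first `m` coordinate functions of an
`(n,m+1)`-function. -/
def truncateF {n m : ℕ} (G : BV n → BV (m + 1)) : BV n → BV m :=
  fun x i => G x i.castSucc

section Helpers

variable {n m p : ℕ}

lemma bv_add_self (v : BV m) : v + v = 0 := by
  funext i
  exact CharTwo.add_self_eq_zero _

lemma isAffine_comp {A : BV n → BV m} {B : BV p → BV n}
    (hA : IsAffineF A) (hB : IsAffineF B) : IsAffineF (fun x => A (B x)) := by
  obtain ⟨L, t, hL⟩ := hA
  obtain ⟨M, s, hM⟩ := hB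
  exact ⟨L.comp M, L s + t, fun x => by simp [hL, hM, add_assoc]⟩

lemma isAffine_linear (L : BV n →ₗ[ZMod 2] BV m) : IsAffineF (fun x => L x) :=
  ⟨L, 0, fun x => by simp⟩

lemma isAffine_add {A B : BV n → BV m} (hA : IsAffineF A) (hB : IsAffineF B) :
    IsAffineF (fun x => A x + B x) := by
  obtain ⟨L, t, hL⟩ := hA
  obtain ⟨M, s, hM⟩ := hB
  refine ⟨L + M, t + s, fun x => ?_⟩
  simp only [hL, hM, LinearMap.add_apply]
  abel

lemma EAequiv_trans {F₁ F₂ F₃ : BV n → BV m} (h12 : EAequiv F₁ F₂) (h23 : EAequiv F₂ F₃) :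
    EAequiv F₁ F₃ := by
  obtain ⟨A₁, A₂, A₃, hb1, ha2, hb2, ha3, h⟩ := h12
  obtain ⟨B₁, B₂, B₃, hb1', ha2', hb2', ha3', h'⟩ := h23
  refine ⟨A₁.comp B₁, fun x => B₂ (A₂ x), fun x => A₁ (B₃ (A₂ x)) + A₃ x,
    hb1.comp hb1', isAffine_comp ha2' ha2, hb2'.comp hb2,
    isAffine_add (isAffine_comp (isAffine_linear A₁) (isAffine_comp ha3' ha2)) ha3, fun x => ?_⟩
  rw [h x, h' (A₂ x), map_add, LinearMap.comp_apply, add_assoc]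

lemma EAequiv_symm {F F' : BV n → BV m} (h : EAequiv F F') : EAequiv F' F := by
  obtain ⟨A₁, A₂, A₃, hb1, ha2, hb2, ha3, hEq⟩ := h
  obtain ⟨L₂, t₂, hL₂⟩ := ha2
  have hLb : Bijective L₂ := by
    constructor
    · intro x y hxy
      apply hb2.injective
      rw [hL₂, hL₂, hxy]
    · intro y
      obtain ⟨x, hx⟩ := hb2.surjective (y + t₂)
      refine ⟨x, ?_⟩
      have h1 : L₂ x + t₂ = y + t₂ := by rw [← hL₂ x, hx]
      have h2 := congrArg (fun z => z + t₂) h1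
      simpa [add_assoc, bv_add_self] using h2
  let e₁ := LinearEquiv.ofBijective A₁ hb1
  let e₂ := LinearEquiv.ofBijective L₂ hLb
  refine ⟨e₁.symm.toLinearMap, fun y => e₂.symm (y + t₂),
    fun y => e₁.symm (A₃ (e₂.symm (y + t₂))), e₁.symm.bijective,
    ⟨e₂.symm.toLinearMap, e₂.symm t₂, fun y => by simp [map_add]⟩, ?_,
    isAffine_comp (isAffine_linear e₁.symm.toLinearMap)
      (isAffine_comp ha3 ⟨e₂.symm.toLinearMap, e₂.symm t₂, fun y => by simp [map_add]⟩), ?_⟩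
  · have : (fun y => e₂.symm (y + t₂)) = (fun z => e₂.symm z) ∘ (fun y => y + t₂) := rfl
    rw [this]
    exact e₂.symm.bijective.comp (Equiv.addRight t₂).bijective
  · intro y
    have hA2 : A₂ (e₂.symm (y + t₂)) = y := by
      rw [hL₂]
      have : L₂ (e₂.symm (y + t₂)) = y + t₂ := e₂.apply_symm_apply (y + t₂)
      rw [this, add_assoc, bv_add_self, add_zero]
    have h2 := hEq (e₂.symm (y + t₂))
    rw [hA2] at h2
    have h3 : e₁.symm (F (e₂.symm (y + t₂))) = F' y + e₁.symm (A₃ (e₂.symm (y + t₂))) := by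
      rw [h2, map_add]
      congr 1
      exact e₁.symm_apply_apply (F' y)
    simp only [LinearEquiv.coe_coe]
    rw [h3, add_assoc, bv_add_self, add_zero]

lemma EAequiv_comp_step {A : BV (m + 1) →ₗ[ZMod 2] BV m}
    {G G' : BV n → BV (m + 1)} (B₁ : BV (m + 1) →ₗ[ZMod 2] BV (m + 1))
    {B₂ : BV n → BV n} {B₃ : BV n → BV (m + 1)}
    (ha2 : IsAffineF B₂) (hb2 : Bijective B₂) (ha3 : IsAffineF B₃)
    (h : ∀ x, G x = B₁ (G' (B₂ x)) + B₃ x) :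
    EAequiv (fun x => A (G x)) (fun x => A (B₁ (G' x))) :=
  ⟨LinearMap.id, B₂, fun x => A (B₃ x), bijective_id, ha2, hb2,
    isAffine_comp (isAffine_linear A) ha3, fun x => by
      simp [h x, map_add]⟩

end Helpers

/-- If `F, F'` are EA-equivalent `(n,m)`-bent functions and `G, G'` are EA-equivalent
`(n,m+1)`-bent functions whose first `m` coordinate functions form `F` resp. `F'`, then
the sets of surjective linear maps `A : 𝔽₂^{m+1} → 𝔽₂ᵐ` with `A ∘ G` EA-equivalent to `F`
resp. `A ∘ G'` EA-equivalent to `F'` have the same cardinality (equivalently,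
`|𝒮(F,G)| = |𝒮(F',G')|`). -/
theorem card_bent_spaces_invariant
    {n m : ℕ} (hev : Even n) (hm : 1 ≤ m)
    (F F' : BV n → BV m) (hF : IsBent F) (hF' : IsBent F') (hFF' : EAequiv F F')
    (G G' : BV n → BV (m + 1)) (hG : IsBent G) (hG' : IsBent G') (hGG' : EAequiv G G')
    (hFG : truncateF G = F) (hFG' : truncateF G' = F') :
    Nat.card {A : BV (m + 1) →ₗ[ZMod 2] BV m //
        Surjective A ∧ EAequiv (fun x => A (G x)) F} =
      Nat.card {A : BV (m + 1) →ₗ[ZMod 2] BV m //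
        Surjective A ∧ EAequiv (fun x => A (G' x)) F'} := by
  obtain ⟨A₁, A₂, A₃, h1, h2, h3, h4, h5⟩ := hGG'
  let e₁ := LinearEquiv.ofBijective A₁ h1
  have hsymmF : EAequiv F' F := EAequiv_symm hFF'
  refine Nat.card_congr ⟨?_, ?_, ?_, ?_⟩
  · rintro ⟨A, hs, he⟩
    refine ⟨A.comp A₁, hs.comp h1.surjective, ?_⟩
    have step : EAequiv (fun x => A (G x)) (fun x => (A.comp A₁) (G' x)) :=
      EAequiv_comp_step A₁ h2 h3 h4 h5
    exact EAequiv_trans (EAequiv_symm step) (EAequiv_trans he hFF')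
  · rintro ⟨B, hs, he⟩
    refine ⟨B.comp e₁.symm.toLinearMap, hs.comp e₁.symm.surjective, ?_⟩
    have step : EAequiv (fun x => (B.comp e₁.symm.toLinearMap) (G x)) (fun x => B (G' x)) := by
      refine ⟨LinearMap.id, A₂, fun x => B (e₁.symm (A₃ x)), bijective_id, h2, h3,
        isAffine_comp (isAffine_linear B) (isAffine_comp (isAffine_linear e₁.symm.toLinearMap) h4), fun x => ?_⟩
      have : e₁.symm (G x) = G' (A₂ x) + e₁.symm (A₃ x) := by
        rw [h5 x, map_add]
        congr 1
        exact e₁.symm_apply_apply (G' (A₂ x))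
      simp only [LinearMap.comp_apply, LinearEquiv.coe_coe, LinearMap.id_apply]
      rw [this, map_add]
    exact EAequiv_trans step (EAequiv_trans he hsymmF)
  · rintro ⟨A, hs, he⟩
    refine Subtype.ext (LinearMap.ext fun x => ?_)
    show A (A₁ (e₁.symm x)) = A x
    congr 1
    exact e₁.apply_symm_apply x
  · rintro ⟨B, hs, he⟩
    refine Subtype.ext (LinearMap.ext fun x => ?_)
    show B (e₁.symm (A₁ x)) = B x
    congr 1
    exact e₁.symm_apply_apply x
end
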